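/- Let {C_1,…,C_k} be an (α,γ)-clustering of X, let p ≠ q, let x ∈ C_q, and let 0 < ε ≤ γ − 1. Let Z_1,…,Z_m be independent X-valued random variables each with law P. Then with probability at least 1 − 3·exp(−(ε·(γ−1)·α / (√8·γ·(γ²+1)))²·m), the sets {j : Z_j ∈ C_p} and {j : Z_j ∈ C_q} are both nonempty and Δ_emp(x,C_p) ≥ (γ−ε)·Δ_emp(x,C_q). -/

import Mathlib

open Finset MeasureTheory ProbabilityTheory

/-- `P(A)`: the probability mass of a finite set `A`. -/
noncomputable def pOf {X : Type*} (P : X → ℝ) (A : Finset X) : ℝ := ∑ x ∈ A, P x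

/-- `Δ(x,A)`: the average distance from `x` to `A`,
weighted by the probability mass function `P` restricted to `A`. -/
noncomputable def Dpt {X : Type*} [MetricSpace X] (P : X → ℝ) (x : X) (A : Finset X) : ℝ :=
  (∑ y ∈ A, P y * dist x y) / pOf P A

/-- `{C_1,…,C_k}` is an `(α,γ)`-clustering: a partition of `X` into nonempty parts, each of
probability at least `α`, such that `Δ(x,C_j) ≥ γ·Δ(x,C_i)` for all `i ≠ j` and `x ∈ C_i`. -/
def IsGoodClustering {X : Type*} [Fintype X] [MetricSpace X] (P : X → ℝ) (α γ : ℝ)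
    {k : ℕ} (C : Fin k → Finset X) : Prop :=
  (∀ i, (C i).Nonempty) ∧
  (∀ i j, i ≠ j → Disjoint (C i) (C j)) ∧
  (∀ x : X, ∃ i, x ∈ C i) ∧
  (∀ i, α ≤ pOf P (C i)) ∧
  (∀ i j, i ≠ j → ∀ x ∈ C i, γ * Dpt P x (C i) ≤ Dpt P x (C j))

/-- The empirical proximity `Δ_emp(x,C)` of `x` to `C`, given sample values `Zv : Fin m → X`:
the average of `d(x, Z_j)` over those `j` with `Z_j ∈ C` (with value `0` if there are none). -/
noncomputable def Demp {X : Type*} [MetricSpace X] [DecidableEq X] {m : ℕ}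
    (Zv : Fin m → X) (x : X) (C : Finset X) : ℝ :=
  (∑ j ∈ Finset.univ.filter (fun j => Zv j ∈ C), dist x (Zv j)) /
    ((Finset.univ.filter (fun j => Zv j ∈ C)).card : ℝ)


private lemma exp_le_quadratic {u : ℝ} (hu : u ≤ 0) : Real.exp u ≤ 1 + u + u ^ 2 / 2 := by
  have hd : ∀ w : ℝ, HasDerivAt (fun w : ℝ => 1 + w + w ^ 2 / 2 - Real.exp w)
      (1 + w - Real.exp w) w := by
    intro w
    have h1 : HasDerivAt (fun w : ℝ => 1 + w + w ^ 2 / 2) (1 + w) w := by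
      have := (((hasDerivAt_id w).const_add 1).add ((hasDerivAt_pow 2 w).div_const 2))
      exact this.congr_deriv (by norm_num)
    exact h1.sub (Real.hasDerivAt_exp w)
  have hanti : Antitone (fun w : ℝ => 1 + w + w ^ 2 / 2 - Real.exp w) := by
    apply antitone_of_deriv_nonpos
    · exact fun w => (hd w).differentiableAt
    · intro w
      rw [(hd w).deriv]
      nlinarith [Real.add_one_le_exp w]
  have := hanti hu
  simp only [Real.exp_zero] at this
  nlinarith [this]

private lemma hoeffding_scalar_neg {p u : ℝ} (hp0 : 0 ≤ p) (hp1 : p ≤ 1) (hu : u ≤ 0) :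
    1 - p + p * Real.exp u ≤ Real.exp (p * u + u ^ 2 / 2) := by
  have h2 : p * (Real.exp u - 1) + 1 ≤ Real.exp (p * (Real.exp u - 1)) :=
    Real.add_one_le_exp _
  have h3 : p * (Real.exp u - 1) ≤ p * u + u ^ 2 / 2 := by
    have h := exp_le_quadratic hu
    nlinarith [mul_le_mul_of_nonneg_left (by nlinarith : Real.exp u - 1 ≤ u + u ^ 2 / 2) hp0,
      sq_nonneg u]
  calc 1 - p + p * Real.exp u = p * (Real.exp u - 1) + 1 := by ring
    _ ≤ Real.exp (p * (Real.exp u - 1)) := h2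
    _ ≤ Real.exp (p * u + u ^ 2 / 2) := Real.exp_le_exp.2 h3

private lemma hoeffding_scalar {p : ℝ} (u : ℝ) (hp0 : 0 ≤ p) (hp1 : p ≤ 1) :
    1 - p + p * Real.exp u ≤ Real.exp (p * u + u ^ 2 / 2) := by
  rcases le_or_gt u 0 with h | h
  · exact hoeffding_scalar_neg hp0 hp1 h
  · have h' := hoeffding_scalar_neg (p := 1 - p) (u := -u) (by linarith) (by linarith)
      (by linarith)
    have hexp := Real.exp_pos u
    calc 1 - p + p * Real.exp u
        = Real.exp u * (1 - (1 - p) + (1 - p) * Real.exp (-u)) := by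
          rw [Real.exp_neg]; field_simp; ring
      _ ≤ Real.exp u * Real.exp ((1 - p) * (-u) + (-u) ^ 2 / 2) :=
          mul_le_mul_of_nonneg_left h' hexp.le
      _ = Real.exp (p * u + u ^ 2 / 2) := by rw [← Real.exp_add]; ring_nf

private lemma integral_comp_eq_sum {X : Type*} [Fintype X] [MeasurableSpace X]
    [MeasurableSingletonClass X]
    (P : X → ℝ) (hP : ∀ x, 0 ≤ P x)
    {Ω : Type*} [MeasurableSpace Ω] (μ : Measure Ω) [IsProbabilityMeasure μ]
    (W : Ω → X) (hW : Measurable W) (hlaw : ∀ y : X, μ (W ⁻¹' {y}) = ENNReal.ofReal (P y))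
    (f : X → ℝ) : ∫ ω, f (W ω) ∂μ = ∑ y, P y * f y := by
  classical
  have hrw : ∀ ω, f (W ω) = ∑ y : X, Set.indicator (W ⁻¹' {y}) (fun _ => f y) ω := by
    intro ω
    have h1 : ∀ y : X, Set.indicator (W ⁻¹' {y}) (fun _ => f y) ω
        = if W ω = y then f y else 0 := by
      intro y
      simp [Set.indicator_apply, Set.mem_preimage, Set.mem_singleton_iff]
    simp_rw [h1, Finset.sum_ite_eq]
    simp
  simp_rw [hrw]
  rw [integral_finset_sum]
  · refine Finset.sum_congr rfl fun y _ => ?_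
    rw [integral_indicator_const _ (hW (measurableSet_singleton y)), measureReal_def, hlaw y, smul_eq_mul,
      ENNReal.toReal_ofReal (hP y)]
  · intro y _
    exact (integrable_const (f y)).indicator (hW (measurableSet_singleton y))

private lemma sum_exp_le {X : Type*} [Fintype X] (P : X → ℝ) (hP : ∀ x, 0 ≤ P x)
    (hsum : ∑ x, P x = 1)
    (g : X → ℝ) (lo B : ℝ) (hB : 0 < B) (hg : ∀ y, g y ∈ Set.Icc lo (lo + B)) (l : ℝ) :
    ∑ y, P y * Real.exp (l * g y)
      ≤ Real.exp (l * (∑ y, P y * g y) + l ^ 2 * B ^ 2 / 2) := by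
  classical
  set s : X → ℝ := fun y => (g y - lo) / B with hs_def
  have hs0 : ∀ y, 0 ≤ s y := fun y => div_nonneg (by linarith [(hg y).1]) hB.le
  have hs1 : ∀ y, s y ≤ 1 := fun y => by
    rw [div_le_one hB]; linarith [(hg y).2]
  have hgy : ∀ y, g y = lo + s y * B := fun y => by
    simp only [hs_def]; rw [div_mul_cancel₀ _ hB.ne']; ring
  -- chord bound
  have chord : ∀ y, Real.exp (l * g y)
      ≤ (1 - s y) * Real.exp (l * lo) + s y * Real.exp (l * (lo + B)) := by
    intro y
    have := convexOn_exp.2 (Set.mem_univ (l * lo)) (Set.mem_univ (l * (lo + B)))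
      (by linarith [hs1 y] : (0:ℝ) ≤ 1 - s y) (hs0 y) (by ring)
    simp only [smul_eq_mul] at this
    refine le_trans (le_of_eq ?_) this
    congr 1; rw [hgy y]; ring
  set pb : ℝ := ∑ y, P y * s y with hpb_def
  have hpb0 : 0 ≤ pb := Finset.sum_nonneg fun y _ => mul_nonneg (hP y) (hs0 y)
  have hpb1 : pb ≤ 1 := by
    rw [hpb_def, ← hsum]
    exact Finset.sum_le_sum fun y _ => by
      nlinarith [hP y, hs1 y, hs0 y]
  have e1 : ∀ c : ℝ, ∑ y, P y * c = c := fun c => by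
    rw [← Finset.sum_mul, hsum, one_mul]
  have hmean : ∑ y, P y * g y = lo + pb * B := by
    calc ∑ y, P y * g y = ∑ y, (P y * lo + P y * s y * B) :=
          Finset.sum_congr rfl fun y _ => by rw [hgy y]; ring
      _ = (∑ y, P y * lo) + (∑ y, P y * s y) * B := by
          rw [Finset.sum_add_distrib, Finset.sum_mul]
      _ = lo + pb * B := by rw [e1 lo, hpb_def]
  calc ∑ y, P y * Real.exp (l * g y)
      ≤ ∑ y, P y * ((1 - s y) * Real.exp (l * lo) + s y * Real.exp (l * (lo + B))) :=
        Finset.sum_le_sum fun y _ => mul_le_mul_of_nonneg_left (chord y) (hP y)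
    _ = ∑ y, (P y * Real.exp (l * lo) - P y * s y * Real.exp (l * lo)
          + P y * s y * Real.exp (l * (lo + B))) :=
        Finset.sum_congr rfl fun y _ => by ring
    _ = (∑ y, P y * Real.exp (l * lo)) - (∑ y, P y * s y) * Real.exp (l * lo)
          + (∑ y, P y * s y) * Real.exp (l * (lo + B)) := by
        rw [Finset.sum_add_distrib, Finset.sum_sub_distrib, Finset.sum_mul, Finset.sum_mul]
    _ = Real.exp (l * lo) * (1 - pb + pb * Real.exp (l * B)) := by
        rw [e1, ← hpb_def, show l * (lo + B) = l * lo + l * B by ring, Real.exp_add]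
        ring
    _ ≤ Real.exp (l * lo) * Real.exp (pb * (l * B) + (l * B) ^ 2 / 2) :=
        mul_le_mul_of_nonneg_left (hoeffding_scalar (l * B) hpb0 hpb1) (Real.exp_pos _).le
    _ = Real.exp (l * (∑ y, P y * g y) + l ^ 2 * B ^ 2 / 2) := by
        rw [← Real.exp_add, hmean]
        ring_nf

private lemma concentration {X : Type*} [Fintype X] [MeasurableSpace X]
    [MeasurableSingletonClass X]
    (P : X → ℝ) (hP : ∀ x, 0 ≤ P x) (hsum : ∑ x, P x = 1)
    {Ω : Type*} [MeasurableSpace Ω] (μ : Measure Ω) [IsProbabilityMeasure μ]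
    (m : ℕ) (Z : Fin m → Ω → X) (hmeas : ∀ j, Measurable (Z j))
    (hindep : iIndepFun Z μ)
    (hlaw : ∀ j, ∀ y : X, μ (Z j ⁻¹' {y}) = ENNReal.ofReal (P y))
    (g : X → ℝ) (lo B : ℝ) (hB : 0 < B) (hg : ∀ y, g y ∈ Set.Icc lo (lo + B))
    (t : ℝ) (ht : 0 ≤ t) :
    (μ {ω | ∑ j, g (Z j ω) ≤ m * ((∑ y, P y * g y) - t * B)}).toReal
      ≤ Real.exp (-(t ^ 2 / 2) * m) := by
  classical
  set l : ℝ := -t / B with hl_def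
  have hl : l ≤ 0 := div_nonpos_of_nonpos_of_nonneg (neg_nonpos.2 ht) hB.le
  set Y : Fin m → Ω → ℝ := fun j ω => g (Z j ω) with hY_def
  have hYmeas : ∀ j, Measurable (Y j) := fun j => (measurable_of_finite g).comp (hmeas j)
  have hYindep : iIndepFun Y μ :=
    hindep.comp (fun _ => g) (fun _ => measurable_of_finite g)
  have hSfun : ∀ ω, (∑ j, Y j) ω = ∑ j, g (Z j ω) := by
    intro ω; simp [hY_def, Finset.sum_apply]
  have hSmeas : Measurable (∑ j, Y j) := by
    have : (∑ j, Y j) = fun ω => ∑ j, Y j ω := by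
      ext ω; simp [Finset.sum_apply]
    rw [this]
    exact Finset.measurable_sum _ fun j _ => hYmeas j
  -- bound for integrability
  have hgabs : ∀ y, |g y| ≤ |lo| + B := by
    intro y
    rcases hg y with ⟨h1, h2⟩
    rw [abs_le]
    constructor <;> [skip; skip] <;> cases abs_cases lo <;> nlinarith
  have hint : Integrable (fun ω => Real.exp (l * (∑ j, Y j) ω)) μ := by
    refine Integrable.mono' (integrable_const (Real.exp (|l| * (m * (|lo| + B)))))
      (((hSmeas.const_mul l).exp).aestronglyMeasurable) (ae_of_all _ fun ω => ?_)
    rw [Real.norm_eq_abs, Real.abs_exp, Real.exp_le_exp]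
    calc l * (∑ j, Y j) ω ≤ |l * (∑ j, Y j) ω| := le_abs_self _
      _ = |l| * |(∑ j, Y j) ω| := abs_mul _ _
      _ ≤ |l| * (m * (|lo| + B)) := by
          apply mul_le_mul_of_nonneg_left _ (abs_nonneg l)
          rw [hSfun]
          calc |∑ j, g (Z j ω)| ≤ ∑ j, |g (Z j ω)| := Finset.abs_sum_le_sum_abs _ _
            _ ≤ ∑ _j : Fin m, (|lo| + B) := Finset.sum_le_sum fun j _ => hgabs _
            _ = m * (|lo| + B) := by simp [Finset.sum_const, nsmul_eq_mul]; ring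
  -- Chernoff
  have hcher := measure_le_le_exp_mul_mgf (μ := μ) (X := ∑ j, Y j)
    (m * ((∑ y, P y * g y) - t * B)) hl hint
  have hmgf : mgf (∑ j, Y j) μ l ≤ Real.exp (l * (∑ y, P y * g y) + l ^ 2 * B ^ 2 / 2) ^ m := by
    rw [hYindep.mgf_sum hYmeas]
    have hterm : ∀ j : Fin m, mgf (Y j) μ l = ∑ y, P y * Real.exp (l * g y) := by
      intro j
      unfold mgf
      exact integral_comp_eq_sum P hP μ (Z j) (hmeas j) (hlaw j) (fun y => Real.exp (l * g y))
    calc ∏ j, mgf (Y j) μ l = ∏ _j : Fin m, ∑ y, P y * Real.exp (l * g y) :=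
          Finset.prod_congr rfl fun j _ => hterm j
      _ ≤ ∏ _j : Fin m, Real.exp (l * (∑ y, P y * g y) + l ^ 2 * B ^ 2 / 2) := by
          apply Finset.prod_le_prod
          · exact fun j _ => Finset.sum_nonneg fun y _ =>
              mul_nonneg (hP y) (Real.exp_pos _).le
          · exact fun j _ => sum_exp_le P hP hsum g lo B hB hg l
      _ = Real.exp (l * (∑ y, P y * g y) + l ^ 2 * B ^ 2 / 2) ^ m := by
          rw [Finset.prod_const, Finset.card_univ, Fintype.card_fin]
  have hset : {ω | ∑ j, g (Z j ω) ≤ m * ((∑ y, P y * g y) - t * B)}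
      = {ω | (∑ j, Y j) ω ≤ m * ((∑ y, P y * g y) - t * B)} := by
    ext ω; rw [Set.mem_setOf_eq, Set.mem_setOf_eq, hSfun]
  rw [hset]
  refine hcher.trans ?_
  calc Real.exp (-l * (m * ((∑ y, P y * g y) - t * B))) * mgf (∑ j, Y j) μ l
      ≤ Real.exp (-l * (m * ((∑ y, P y * g y) - t * B)))
        * Real.exp (l * (∑ y, P y * g y) + l ^ 2 * B ^ 2 / 2) ^ m :=
        mul_le_mul_of_nonneg_left hmgf (Real.exp_pos _).le
    _ = Real.exp (-(t ^ 2 / 2) * m) := by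
        rw [← Real.exp_nat_mul, ← Real.exp_add]
        congr 1
        have hB' : (B : ℝ) ≠ 0 := hB.ne'
        rw [hl_def]
        field_simp
        ring

private lemma pOf_pos' {X : Type*} {P : X → ℝ} (hP : ∀ x, 0 < P x) {A : Finset X}
    (hA : A.Nonempty) : 0 < pOf P A :=
  Finset.sum_pos (fun y _ => hP y) hA

private lemma Dpt_nonneg' {X : Type*} [MetricSpace X] {P : X → ℝ} (hP : ∀ x, 0 < P x)
    (x : X) (A : Finset X) : 0 ≤ Dpt P x A :=
  div_nonneg (Finset.sum_nonneg fun y _ => mul_nonneg (hP y).le dist_nonneg)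
    (Finset.sum_nonneg fun y _ => (hP y).le)

private lemma Dpt_le_dist_add' {X : Type*} [MetricSpace X] {P : X → ℝ} (hP : ∀ x, 0 < P x)
    {A : Finset X} (hA : A.Nonempty) (x z : X) :
    Dpt P x A ≤ dist x z + Dpt P z A := by
  have hw := pOf_pos' hP hA
  rw [Dpt, Dpt, div_le_iff₀ hw]
  have hexp : (dist x z + (∑ y ∈ A, P y * dist z y) / pOf P A) * pOf P A
      = dist x z * pOf P A + ∑ y ∈ A, P y * dist z y := by field_simp
  rw [hexp]
  calc ∑ y ∈ A, P y * dist x y ≤ ∑ y ∈ A, (P y * dist x z + P y * dist z y) :=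
        Finset.sum_le_sum fun y _ => by
          have h := dist_triangle x z y
          nlinarith [(hP y).le]
    _ = dist x z * pOf P A + ∑ y ∈ A, P y * dist z y := by
        rw [Finset.sum_add_distrib, pOf, Finset.mul_sum]
        congr 1
        exact Finset.sum_congr rfl fun y _ => by ring

private lemma dist_le_Dpt_add' {X : Type*} [MetricSpace X] {P : X → ℝ} (hP : ∀ x, 0 < P x)
    {A : Finset X} (hA : A.Nonempty) (x z : X) :
    dist x z ≤ Dpt P x A + Dpt P z A := by
  have hw := pOf_pos' hP hA
  rw [Dpt, Dpt, ← add_div, le_div_iff₀ hw]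
  calc dist x z * pOf P A = ∑ y ∈ A, P y * dist x z := by
        rw [pOf, Finset.mul_sum]
        exact Finset.sum_congr rfl fun y _ => by ring
    _ ≤ ∑ y ∈ A, (P y * dist x y + P y * dist z y) :=
        Finset.sum_le_sum fun y _ => by
          have h := dist_triangle x y z
          have h2 : dist y z = dist z y := dist_comm y z
          nlinarith [(hP y).le]
    _ = (∑ y ∈ A, P y * dist x y) + ∑ y ∈ A, P y * dist z y := Finset.sum_add_distrib

private lemma assemble {Ω : Type*} [MeasurableSpace Ω] (μ : Measure Ω) [IsProbabilityMeasure μ]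
    (A B T : Set Ω) (hA : MeasurableSet A) (hB : MeasurableSet B)
    (hsub : (A ∪ B)ᶜ ⊆ T) (E : ℝ) (hE : 0 < E)
    (hpA : (μ A).toReal ≤ E) (hpB : (μ B).toReal ≤ E) :
    1 - 3 * E ≤ (μ T).toReal := by
  have hU : MeasurableSet (A ∪ B) := hA.union hB
  have h1 : μ (A ∪ B) ≤ 1 := prob_le_one
  have hcompl : (μ (A ∪ B)ᶜ).toReal = 1 - (μ (A ∪ B)).toReal := by
    rw [prob_compl_eq_one_sub hU, ENNReal.toReal_sub_of_le h1 ENNReal.one_ne_top,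
      ENNReal.toReal_one]
  have hunion : (μ (A ∪ B)).toReal ≤ (μ A).toReal + (μ B).toReal := by
    refine (ENNReal.toReal_mono ?_ (measure_union_le A B)).trans_eq
      (ENNReal.toReal_add (measure_ne_top μ A) (measure_ne_top μ B))
    exact ENNReal.add_ne_top.2 ⟨measure_ne_top μ A, measure_ne_top μ B⟩
  have hmono : (μ (A ∪ B)ᶜ).toReal ≤ (μ T).toReal :=
    ENNReal.toReal_mono (measure_ne_top μ T) (measure_mono hsub)
  linarith

set_option maxHeartbeats 3200000 in
/-- Sampling lemma. -/
theorem stmt_3 {X : Type*} [Fintype X] [MetricSpace X] [DecidableEq X]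
    [MeasurableSpace X] [MeasurableSingletonClass X]
    (P : X → ℝ) (hP : ∀ x, 0 < P x) (hsum : ∑ x, P x = 1)
    (α γ : ℝ) (hα : 0 < α) (hγ : 1 < γ)
    {k : ℕ} (C : Fin k → Finset X) (hC : IsGoodClustering P α γ C)
    (p q : Fin k) (hpq : p ≠ q) (x : X) (hx : x ∈ C q)
    (ε : ℝ) (hε : 0 < ε) (hεγ : ε ≤ γ - 1)
    {Ω : Type*} [MeasurableSpace Ω] (μ : Measure Ω) [IsProbabilityMeasure μ]
    (m : ℕ) (Z : Fin m → Ω → X) (hmeas : ∀ j, Measurable (Z j))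
    (hindep : iIndepFun Z μ)
    (hlaw : ∀ j, ∀ y : X, μ (Z j ⁻¹' {y}) = ENNReal.ofReal (P y)) :
    1 - 3 * Real.exp (-(ε * (γ - 1) * α / (Real.sqrt 8 * γ * (γ ^ 2 + 1))) ^ 2 * m) ≤
      (μ {ω | (Finset.univ.filter (fun j => Z j ω ∈ C p)).Nonempty ∧
              (Finset.univ.filter (fun j => Z j ω ∈ C q)).Nonempty ∧
              (γ - ε) * Demp (fun j => Z j ω) x (C q) ≤
                Demp (fun j => Z j ω) x (C p)}).toReal := by
  obtain ⟨hne, hdisj, hcover, hmass, hsep⟩ := hC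
  have hγ0 : (0:ℝ) < γ := by linarith
  have hγ1 : (0:ℝ) < γ - 1 := by linarith
  have hP0 : ∀ y, (0:ℝ) ≤ P y := fun y => (hP y).le
  set Δp := Dpt P x (C p) with hΔp_def
  set Δq := Dpt P x (C q) with hΔq_def
  have hΔp0 : 0 ≤ Δp := Dpt_nonneg' hP x (C p)
  have hΔq0 : 0 ≤ Δq := Dpt_nonneg' hP x (C q)
  have hsep1 : γ * Δq ≤ Δp := hsep q p (Ne.symm hpq) x hx
  have hwp : 0 < pOf P (C p) := pOf_pos' hP (hne p)
  have hwq : 0 < pOf P (C q) := pOf_pos' hP (hne q)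
  have hαp : α ≤ pOf P (C p) := hmass p
  have hαq : α ≤ pOf P (C q) := hmass q
  set K : ℝ := (γ ^ 2 + 1) / (γ * (γ - 1)) with hK_def
  have hKpos : 0 < K := div_pos (by positivity) (by positivity)
  have hK1 : 1 ≤ K := by rw [hK_def, le_div_iff₀ (by positivity)]; nlinarith only [hγ0, hγ1]
  have hD1 : ∀ y ∈ C p, dist x y ≤ K * Δp := by
    intro y hy
    have h1 : dist x y ≤ Δp + Dpt P y (C p) := dist_le_Dpt_add' hP (hne p) x y
    have h2 : γ * Dpt P y (C p) ≤ Dpt P y (C q) := hsep p q hpq y hy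
    have h3 : Dpt P y (C q) ≤ dist y x + Δq := Dpt_le_dist_add' hP (hne q) y x
    rw [dist_comm y x] at h3
    have c1 : (γ - 1) * dist x y ≤ γ * Δp + Δq := by
      linarith only [mul_le_mul_of_nonneg_left h1 hγ0.le, h2, h3]
    have c2 : γ * ((γ - 1) * dist x y) ≤ γ * (γ * Δp + Δq) :=
      mul_le_mul_of_nonneg_left c1 hγ0.le
    rw [hK_def, div_mul_eq_mul_div, le_div_iff₀ (by positivity)]
    linarith only [c2, hsep1]
  have hD2 : ∀ y ∈ C q, dist x y ≤ K * Δp := by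
    intro y hy
    have h1 : dist x y ≤ Δq + Dpt P y (C q) := dist_le_Dpt_add' hP (hne q) x y
    have h2 : γ * Dpt P y (C q) ≤ Dpt P y (C p) := hsep q p (Ne.symm hpq) y hy
    have h3 : Dpt P y (C p) ≤ dist y x + Δp := Dpt_le_dist_add' hP (hne p) y x
    rw [dist_comm y x] at h3
    have c1 : (γ - 1) * dist x y ≤ 2 * Δp := by
      linarith only [mul_le_mul_of_nonneg_left h1 hγ0.le, h2, h3, hsep1]
    have c2 : γ * ((γ - 1) * dist x y) ≤ γ * (2 * Δp) :=
      mul_le_mul_of_nonneg_left c1 hγ0.le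
    rw [hK_def, div_mul_eq_mul_div, le_div_iff₀ (by positivity)]
    linarith only [c2, mul_nonneg (sq_nonneg (γ - 1)) hΔp0]
  set lam : ℝ := ε / (2 * γ ^ 2) with hlam_def
  have hlam_pos : 0 < lam := by positivity
  have hlam2 : lam * (2 * γ ^ 2) = ε := by rw [hlam_def]; field_simp
  have hlam1 : lam ≤ 1 := by
    rw [hlam_def, div_le_one (by positivity)]; nlinarith only [hεγ, hγ, sq_nonneg (γ - 1)]
  set t : ℝ := lam * α / K with ht_def
  have ht_pos : 0 < t := by positivity
  have hE_eq : Real.exp (-(t ^ 2 / 2) * m)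
      = Real.exp (-(ε * (γ - 1) * α / (Real.sqrt 8 * γ * (γ ^ 2 + 1))) ^ 2 * m) := by
    congr 2
    have h8 : Real.sqrt 8 ^ 2 = 8 := Real.sq_sqrt (by norm_num)
    have hc : (ε * (γ - 1) * α / (Real.sqrt 8 * γ * (γ ^ 2 + 1))) ^ 2
        = (ε * (γ - 1) * α) ^ 2 / (8 * (γ * (γ ^ 2 + 1)) ^ 2) := by
      have hden : (Real.sqrt 8 * γ * (γ ^ 2 + 1)) ^ 2 = 8 * (γ * (γ ^ 2 + 1)) ^ 2 := by
        rw [mul_pow, mul_pow, h8]; ring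
      rw [div_pow, hden]
    rw [hc, ht_def, hlam_def, hK_def]
    have h1 : γ * (γ - 1) ≠ 0 := by positivity
    have h2 : γ ^ 2 + 1 ≠ 0 := by positivity
    field_simp
    ring
  rw [← hE_eq]
  rcases eq_or_lt_of_le hΔp0 with hΔp_eq | hΔp_pos
  -- Degenerate case: Δp = 0
  · have hΔq_eq : Δq = 0 := by
      have h0 : γ * Δq ≤ γ * 0 := by rw [mul_zero]; exact le_of_le_of_eq hsep1 hΔp_eq.symm
      exact le_antisymm (le_of_mul_le_mul_left h0 hγ0) hΔq0
    have hdzp : ∀ y ∈ C p, dist x y = 0 := fun y hy =>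
      le_antisymm (by have h := hD1 y hy; rw [← hΔp_eq, mul_zero] at h; exact h) dist_nonneg
    have hdzq : ∀ y ∈ C q, dist x y = 0 := fun y hy =>
      le_antisymm (by have h := hD2 y hy; rw [← hΔp_eq, mul_zero] at h; exact h) dist_nonneg
    have htα : t ≤ α := by
      rw [ht_def, div_le_iff₀ hKpos]
      nlinarith only [hlam1, hα.le, hK1, hlam_pos]
    set gP : X → ℝ := fun y => if y ∈ C p then 1 else 0 with hgP_def
    set gQ : X → ℝ := fun y => if y ∈ C q then 1 else 0 with hgQ_def
    have hgP_range : ∀ y, gP y ∈ Set.Icc 0 (0 + 1) := by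
      intro y; by_cases hy : y ∈ C p <;> simp [hgP_def, hy]
    have hgQ_range : ∀ y, gQ y ∈ Set.Icc 0 (0 + 1) := by
      intro y; by_cases hy : y ∈ C q <;> simp [hgQ_def, hy]
    have hsum_gP : ∑ y, P y * gP y = pOf P (C p) := by
      rw [pOf, ← Finset.univ_inter (C p), ← Finset.sum_ite_mem]
      exact Finset.sum_congr rfl fun y _ => by by_cases hy : y ∈ C p <;> simp [hgP_def, hy]
    have hsum_gQ : ∑ y, P y * gQ y = pOf P (C q) := by
      rw [pOf, ← Finset.univ_inter (C q), ← Finset.sum_ite_mem]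
      exact Finset.sum_congr rfl fun y _ => by by_cases hy : y ∈ C q <;> simp [hgQ_def, hy]
    have hcount : ∀ (ω : Ω) (A : Finset X) (g : X → ℝ), (∀ y, g y = if y ∈ A then 1 else 0) →
        ∑ j, g (Z j ω) = ((Finset.univ.filter (fun j => Z j ω ∈ A)).card : ℝ) := by
      intro ω A g hg
      rw [Finset.card_filter]
      push_cast
      exact Finset.sum_congr rfl fun j _ => by rw [hg]
    refine le_trans ?_ (assemble μ
      {ω | ∑ j, gP (Z j ω) ≤ m * ((∑ y, P y * gP y) - t * 1)}
      {ω | ∑ j, gQ (Z j ω) ≤ m * ((∑ y, P y * gQ y) - t * 1)} _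
      (measurableSet_le (Finset.measurable_sum _ fun j _ =>
        (measurable_of_finite gP).comp (hmeas j)) measurable_const)
      (measurableSet_le (Finset.measurable_sum _ fun j _ =>
        (measurable_of_finite gQ).comp (hmeas j)) measurable_const)
      ?_ (Real.exp (-(t ^ 2 / 2) * m)) (Real.exp_pos _)
      (concentration P hP0 hsum μ m Z hmeas hindep hlaw gP 0 1 one_pos hgP_range t ht_pos.le)
      (concentration P hP0 hsum μ m Z hmeas hindep hlaw gQ 0 1 one_pos hgQ_range t ht_pos.le))
    · exact le_refl _
    · intro ω hω
      simp only [Set.mem_compl_iff, Set.mem_union, Set.mem_setOf_eq, not_or, not_le] at hω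
      obtain ⟨hωP, hωQ⟩ := hω
      rw [hcount ω (C p) gP (fun y => rfl), hsum_gP] at hωP
      rw [hcount ω (C q) gQ (fun y => rfl), hsum_gQ] at hωQ
      have hnP : (Finset.univ.filter (fun j => Z j ω ∈ C p)).Nonempty := by
        rw [← Finset.card_pos]
        by_contra hc
        push_neg at hc
        have h0 : (Finset.univ.filter (fun j => Z j ω ∈ C p)).card = 0 := Nat.le_zero.mp hc
        rw [h0] at hωP
        have hm0 : (0:ℝ) ≤ m := Nat.cast_nonneg m
        push_cast at hωP
        have hwt : 0 ≤ pOf P (C p) - t * 1 := by linarith only [hαp, htα]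
        linarith only [hωP, mul_nonneg hm0 hwt]
      have hnQ : (Finset.univ.filter (fun j => Z j ω ∈ C q)).Nonempty := by
        rw [← Finset.card_pos]
        by_contra hc
        push_neg at hc
        have h0 : (Finset.univ.filter (fun j => Z j ω ∈ C q)).card = 0 := Nat.le_zero.mp hc
        rw [h0] at hωQ
        have hm0 : (0:ℝ) ≤ m := Nat.cast_nonneg m
        push_cast at hωQ
        have hwt : 0 ≤ pOf P (C q) - t * 1 := by linarith only [hαq, htα]
        linarith only [hωQ, mul_nonneg hm0 hwt]
      have hDP : Demp (fun j => Z j ω) x (C p) = 0 := by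
        simp only [Demp]
        rw [Finset.sum_eq_zero, zero_div]
        intro j hj
        exact hdzp _ (Finset.mem_filter.mp hj).2
      have hDQ : Demp (fun j => Z j ω) x (C q) = 0 := by
        simp only [Demp]
        rw [Finset.sum_eq_zero, zero_div]
        intro j hj
        exact hdzq _ (Finset.mem_filter.mp hj).2
      exact ⟨hnP, hnQ, by rw [hDP, hDQ, mul_zero]⟩
  -- Main case: 0 < Δp
  · set Bd : ℝ := K * Δp with hBd_def
    have hBd_pos : 0 < Bd := mul_pos hKpos hΔp_pos
    set θ : ℝ := (1 - lam) * Δp with hθ_def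
    set θ' : ℝ := Δq + lam * Δp with hθ'_def
    have hθ0 : 0 ≤ θ := mul_nonneg (by linarith) hΔp0
    have hθBd : θ ≤ Bd := by
      rw [hθ_def, hBd_def]
      nlinarith only [hK1, hΔp0, hlam_pos]
    have hθ'0 : 0 ≤ θ' := add_nonneg hΔq0 (mul_nonneg hlam_pos.le hΔp0)
    have hθ'Bd : θ' ≤ Bd := by
      rw [hθ'_def, hBd_def, hK_def,
        div_mul_eq_mul_div (γ ^ 2 + 1) (γ * (γ - 1)) Δp, le_div_iff₀ (by positivity)]
      have f1 := mul_le_mul_of_nonneg_right hsep1 hγ1.le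
      have f2a : lam * (2 * γ ^ 2) * Δp = ε * Δp := by rw [hlam2]
      have f2b : ε * Δp ≤ (γ - 1) * Δp := mul_le_mul_of_nonneg_right hεγ hΔp0
      have f3 : 0 ≤ lam * Δp * γ := mul_nonneg (mul_nonneg hlam_pos.le hΔp0) hγ0.le
      have f4' : 0 ≤ 2 * γ ^ 2 - 3 * γ + 5 := by nlinarith only [sq_nonneg (4 * γ - 3)]
      have f4 := mul_nonneg hΔp0 f4'
      linarith only [f1, f2a, f2b, f3, f4]
    have hγε : (0:ℝ) ≤ γ - ε := by linarith
    have hstep : lam * γ * (γ + 1 - ε) ≤ ε := by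
      have g1 : 0 ≤ lam * γ * (γ + ε - 1) := mul_nonneg (mul_nonneg hlam_pos.le hγ0.le)
        (by linarith only [hγ, hε] : (0:ℝ) ≤ γ + ε - 1)
      linarith only [hlam2, g1]
    have hkey : (γ - ε) * θ' ≤ θ := by
      rw [hθ'_def, hθ_def]
      have hA := mul_le_mul_of_nonneg_left hsep1 hγε
      have hBb := mul_le_mul_of_nonneg_right hstep hΔp0
      apply le_of_mul_le_mul_left _ hγ0
      linarith only [hA, hBb]
    have hw_eq_p : pOf P (C p) = ∑ y ∈ C p, P y := rfl
    have hw_eq_q : pOf P (C q) = ∑ y ∈ C q, P y := rfl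
    have hnum_p : ∑ y ∈ C p, P y * dist x y = Δp * pOf P (C p) := by
      rw [hΔp_def, Dpt, div_mul_cancel₀ _ hwp.ne']
    have hnum_q : ∑ y ∈ C q, P y * dist x y = Δq * pOf P (C q) := by
      rw [hΔq_def, Dpt, div_mul_cancel₀ _ hwq.ne']
    set gB : X → ℝ := fun y => if y ∈ C p then dist x y - θ else 0 with hgB_def
    set gC : X → ℝ := fun y => if y ∈ C q then θ' - dist x y else 0 with hgC_def
    have hgB_range : ∀ y, gB y ∈ Set.Icc (-θ) (-θ + Bd) := by
      intro y
      by_cases hy : y ∈ C p <;> simp only [hgB_def, hy, if_true, if_false, Set.mem_Icc]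
      · have hd0 : 0 ≤ dist x y := dist_nonneg
        have hd1 := hD1 y hy
        constructor <;> linarith
      · constructor <;> linarith
    have hgC_range : ∀ y, gC y ∈ Set.Icc (θ' - Bd) (θ' - Bd + Bd) := by
      intro y
      by_cases hy : y ∈ C q <;> simp only [hgC_def, hy, if_true, if_false, Set.mem_Icc]
      · have hd0 : 0 ≤ dist x y := dist_nonneg
        have hd2 := hD2 y hy
        constructor <;> linarith
      · constructor <;> linarith
    have hsum_gB : ∑ y, P y * gB y = lam * Δp * pOf P (C p) := by
      have h1 : ∑ y, P y * gB y = ∑ y ∈ C p, (P y * dist x y - P y * θ) := by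
        rw [← Finset.univ_inter (C p), ← Finset.sum_ite_mem]
        exact Finset.sum_congr rfl fun y _ => by
          by_cases hy : y ∈ C p <;> simp [hgB_def, hy] <;> ring
      rw [h1, Finset.sum_sub_distrib, hnum_p, ← Finset.sum_mul, ← hw_eq_p, hθ_def]
      ring
    have hsum_gC : ∑ y, P y * gC y = lam * Δp * pOf P (C q) := by
      have h1 : ∑ y, P y * gC y = ∑ y ∈ C q, (P y * θ' - P y * dist x y) := by
        rw [← Finset.univ_inter (C q), ← Finset.sum_ite_mem]
        exact Finset.sum_congr rfl fun y _ => by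
          by_cases hy : y ∈ C q <;> simp [hgC_def, hy] <;> ring
      rw [h1, Finset.sum_sub_distrib, hnum_q, ← Finset.sum_mul, ← hw_eq_q, hθ'_def]
      ring
    have htBd : t * Bd = lam * α * Δp := by
      rw [ht_def, hBd_def]
      field_simp
    refine le_trans ?_ (assemble μ
      {ω | ∑ j, gB (Z j ω) ≤ m * ((∑ y, P y * gB y) - t * Bd)}
      {ω | ∑ j, gC (Z j ω) ≤ m * ((∑ y, P y * gC y) - t * Bd)} _
      (measurableSet_le (Finset.measurable_sum _ fun j _ =>
        (measurable_of_finite gB).comp (hmeas j)) measurable_const)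
      (measurableSet_le (Finset.measurable_sum _ fun j _ =>
        (measurable_of_finite gC).comp (hmeas j)) measurable_const)
      ?_ (Real.exp (-(t ^ 2 / 2) * m)) (Real.exp_pos _)
      (concentration P hP0 hsum μ m Z hmeas hindep hlaw gB (-θ) Bd hBd_pos hgB_range
        t ht_pos.le)
      (concentration P hP0 hsum μ m Z hmeas hindep hlaw gC (θ' - Bd) Bd hBd_pos hgC_range
        t ht_pos.le))
    · exact le_refl _
    · intro ω hω
      simp only [Set.mem_compl_iff, Set.mem_union, Set.mem_setOf_eq, not_or, not_le] at hω
      obtain ⟨hωB, hωC⟩ := hω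
      have hm0 : (0:ℝ) ≤ (m:ℝ) := Nat.cast_nonneg m
      have hinB : 0 ≤ lam * Δp * (pOf P (C p) - α) :=
        mul_nonneg (mul_nonneg hlam_pos.le hΔp0) (by linarith)
      have hcB : 0 ≤ (m:ℝ) * ((∑ y, P y * gB y) - t * Bd) := by
        rw [hsum_gB, htBd]
        linarith only [mul_nonneg hm0 hinB]
      have hinC : 0 ≤ lam * Δp * (pOf P (C q) - α) :=
        mul_nonneg (mul_nonneg hlam_pos.le hΔp0) (by linarith)
      have hcC : 0 ≤ (m:ℝ) * ((∑ y, P y * gC y) - t * Bd) := by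
        rw [hsum_gC, htBd]
        linarith only [mul_nonneg hm0 hinC]
      have hSB : 0 < ∑ j, gB (Z j ω) := hcB.trans_lt hωB
      have hSC : 0 < ∑ j, gC (Z j ω) := hcC.trans_lt hωC
      have hsplitB : ∑ j, gB (Z j ω)
          = (∑ j ∈ Finset.univ.filter (fun j => Z j ω ∈ C p), dist x (Z j ω))
            - ((Finset.univ.filter (fun j => Z j ω ∈ C p)).card : ℝ) * θ := by
        have h1 : ∑ j ∈ Finset.univ.filter (fun j => Z j ω ∈ C p), (dist x (Z j ω) - θ)
            = ∑ j, gB (Z j ω) := by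
          rw [Finset.sum_filter]
        rw [← h1, Finset.sum_sub_distrib, Finset.sum_const, nsmul_eq_mul]
      have hsplitC : ∑ j, gC (Z j ω)
          = ((Finset.univ.filter (fun j => Z j ω ∈ C q)).card : ℝ) * θ'
            - (∑ j ∈ Finset.univ.filter (fun j => Z j ω ∈ C q), dist x (Z j ω)) := by
        have h1 : ∑ j ∈ Finset.univ.filter (fun j => Z j ω ∈ C q), (θ' - dist x (Z j ω))
            = ∑ j, gC (Z j ω) := by
          rw [Finset.sum_filter]
        rw [← h1, Finset.sum_sub_distrib, Finset.sum_const, nsmul_eq_mul]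
      rw [hsplitB] at hSB
      rw [hsplitC] at hSC
      have hFpne : (Finset.univ.filter (fun j => Z j ω ∈ C p)).Nonempty := by
        rcases Finset.eq_empty_or_nonempty (Finset.univ.filter (fun j => Z j ω ∈ C p))
          with he | hne'
        · rw [he] at hSB
          simp at hSB
        · exact hne'
      have hFqne : (Finset.univ.filter (fun j => Z j ω ∈ C q)).Nonempty := by
        rcases Finset.eq_empty_or_nonempty (Finset.univ.filter (fun j => Z j ω ∈ C q))
          with he | hne'
        · rw [he] at hSC
          simp at hSC
        · exact hne'
      have hNp : (0:ℝ) < ((Finset.univ.filter (fun j => Z j ω ∈ C p)).card : ℝ) := by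
        exact_mod_cast Finset.card_pos.2 hFpne
      have hNq : (0:ℝ) < ((Finset.univ.filter (fun j => Z j ω ∈ C q)).card : ℝ) := by
        exact_mod_cast Finset.card_pos.2 hFqne
      refine ⟨hFpne, hFqne, ?_⟩
      have hDempP : θ ≤ Demp (fun j => Z j ω) x (C p) := by
        simp only [Demp]
        rw [le_div_iff₀ hNp]
        linarith
      have hDempQ : Demp (fun j => Z j ω) x (C q) ≤ θ' := by
        simp only [Demp]
        rw [div_le_iff₀ hNq]
        linarith
      calc (γ - ε) * Demp (fun j => Z j ω) x (C q) ≤ (γ - ε) * θ' :=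
            mul_le_mul_of_nonneg_left hDempQ hγε
        _ ≤ θ := hkey
        _ ≤ Demp (fun j => Z j ω) x (C p) := hDempP
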